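/- arXiv:1710.10770 — 8 statements merged into one kernel-verified Lean document; each statement's English description precedes it below -/
import Mathlib

section
/- Let M ≥ 0 and let (a_k)_{k≥0} be a sequence of nonnegative real numbers satisfying a_{k+1} ≤ (1 − s_k) a_k + (1/2) s_k² M for all k ≥ 0, where s_k = 2/(k+2). Then a_k ≤ 2M/(k+2) for all k ≥ 1. -/
/-- Stepsize recursion lemma for Frank–Wolfe (Lemma 3.3): if `a` is a nonnegative
sequence with `a (k+1) ≤ (1 - s_k) * a k + (1/2) * s_k ^ 2 * M` for the stepsizes
`s_k = 2 / (k + 2)`, then `a k ≤ 2 * M / (k + 2)` for all `k ≥ 1`. -/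
theorem frankWolfe_stepsize_recursion (M : ℝ) (hM : 0 ≤ M) (a : ℕ → ℝ)
    (ha : ∀ k, 0 ≤ a k)
    (hrec : ∀ k : ℕ, a (k + 1) ≤ (1 - 2 / ((k : ℝ) + 2)) * a k
      + (1 / 2) * (2 / ((k : ℝ) + 2)) ^ 2 * M) :
    ∀ k : ℕ, 1 ≤ k → a k ≤ 2 * M / ((k : ℝ) + 2) := by
  intro k hk
  induction k with
  | zero => omega
  | succ n ih =>
    rcases Nat.eq_zero_or_pos n with hn | hn
    · subst hn
      have h := hrec 0
      norm_num at h ⊢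
      linarith
    · have ihn := ih hn
      have h := hrec n
      have hn2 : (0:ℝ) < (n:ℝ) + 2 := by positivity
      have hcoef : (0:ℝ) ≤ 1 - 2 / ((n:ℝ) + 2) := by
        rw [sub_nonneg, div_le_one hn2]
        have : (1:ℝ) ≤ n := by exact_mod_cast hn
        linarith
      have key : a (n+1) ≤ (1 - 2 / ((n:ℝ) + 2)) * (2 * M / ((n:ℝ) + 2))
          + (1 / 2) * (2 / ((n:ℝ) + 2)) ^ 2 * M := by
        calc a (n+1) ≤ (1 - 2 / ((n:ℝ) + 2)) * a n
              + (1 / 2) * (2 / ((n:ℝ) + 2)) ^ 2 * M := h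
          _ ≤ _ := by gcongr
      push_cast
      refine key.trans ?_
      have heq : (1 - 2 / ((n:ℝ) + 2)) * (2 * M / ((n:ℝ) + 2))
          + (1 / 2) * (2 / ((n:ℝ) + 2)) ^ 2 * M
          = 2 * M * ((n:ℝ) + 1) / ((n:ℝ) + 2) ^ 2 := by
        field_simp
        ring
      rw [heq, div_le_div_iff₀ (by positivity) (by positivity)]
      nlinarith
end

section
/- (Euclidean instantiation of the Frank-Wolfe sublinear rate, Theorem 3.4.) Let E be a real inner product space, X ⊆ E a convex set, φ : E → ℝ a function with gradient ∇φ, and M ≥ 0 a constant such that: (i) φ is convex on X in the first-order sense, i.e., φ(y) ≥ φ(x) + ⟪∇φ(x), y − x⟫ for all x, y ∈ X; (ii) the curvature bound holds: φ(x + s(z − x)) ≤ φ(x) + s⟪∇φ(x), z − x⟫ + (s²/2)M for all x, z ∈ X and s ∈ [0,1]. Let x* ∈ X satisfy φ(x*) ≤ φ(z) for all z ∈ X. Suppose X_0 ∈ X and for every k ≥ 0 there is Z_k ∈ X with ⟪∇φ(X_k), Z_k − X_k⟫ ≤ ⟪∇φ(X_k), z − X_k⟫ for all z ∈ X, and X_{k+1}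 = X_k + (2/(k+2))(Z_k − X_k). Then φ(X_k) − φ(x*) ≤ 2M/(k+2) for all k ≥ 1. -/
open Set

/-- Euclidean instantiation of the Frank–Wolfe sublinear rate (Theorem 3.4):
under convexity and the curvature bound with constant `M`, the Frank–Wolfe
iterates with stepsize `2/(k+2)` satisfy `φ(X_k) - φ(x*) ≤ 2M/(k+2)`. -/
theorem frankWolfe_sublinear_rate
    {E : Type*} [NormedAddCommGroup E] [InnerProductSpace ℝ E]
    (X : Set E) (hX : Convex ℝ X)
    (φ : E → ℝ) (g : E → E) (M : ℝ) (hM : 0 ≤ M)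
    (hconv : ∀ x ∈ X, ∀ y ∈ X, φ x + inner ℝ (g x) (y - x) ≤ φ y)
    (hcurv : ∀ x ∈ X, ∀ z ∈ X, ∀ s ∈ Icc (0 : ℝ) 1,
      φ (x + s • (z - x)) ≤ φ x + s * inner ℝ (g x) (z - x) + s ^ 2 / 2 * M)
    (xstar : E) (hxstar : xstar ∈ X) (hmin : ∀ z ∈ X, φ xstar ≤ φ z)
    (Xseq Zseq : ℕ → E) (hX0 : Xseq 0 ∈ X)
    (hZmem : ∀ k, Zseq k ∈ X)
    (hZopt : ∀ k, ∀ z ∈ X,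
      (inner ℝ (g (Xseq k)) (Zseq k - Xseq k) : ℝ) ≤ inner ℝ (g (Xseq k)) (z - Xseq k))
    (hupd : ∀ k : ℕ, Xseq (k + 1) = Xseq k + (2 / ((k : ℝ) + 2)) • (Zseq k - Xseq k)) :
    ∀ k : ℕ, 1 ≤ k → φ (Xseq k) - φ xstar ≤ 2 * M / ((k : ℝ) + 2) := by
  -- stepsize facts
  have hs : ∀ k : ℕ, (2 / ((k : ℝ) + 2)) ∈ Icc (0:ℝ) 1 := by
    intro k
    constructor
    · positivity
    · rw [div_le_one (by positivity)]
      have : (0:ℝ) ≤ (k:ℝ) := Nat.cast_nonneg k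
      linarith
  -- membership
  have hmem : ∀ k, Xseq k ∈ X := by
    intro k
    induction k with
    | zero => exact hX0
    | succ n ih =>
      rw [hupd n]
      have h := hX ih (hZmem n) (by linarith [(hs n).2] : (0:ℝ) ≤ 1 - 2 / ((n:ℝ)+2)) (hs n).1 (by ring)
      convert h using 1
      module
  -- key recursion
  have hrec : ∀ k : ℕ, φ (Xseq (k+1)) - φ xstar ≤
      (1 - 2 / ((k:ℝ)+2)) * (φ (Xseq k) - φ xstar) + (2 / ((k:ℝ)+2))^2 / 2 * M := by
    intro k
    set s := 2 / ((k:ℝ)+2) with hsdef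
    have h1 : φ (Xseq (k+1)) ≤ φ (Xseq k) + s * inner ℝ (g (Xseq k)) (Zseq k - Xseq k) + s^2/2 * M := by
      rw [hupd k]
      exact hcurv _ (hmem k) _ (hZmem k) s (hs k)
    have h2 : (inner ℝ (g (Xseq k)) (Zseq k - Xseq k) : ℝ) ≤ φ xstar - φ (Xseq k) := by
      have := hZopt k xstar hxstar
      have := hconv _ (hmem k) xstar hxstar
      linarith
    have hs0 : 0 ≤ s := (hs k).1
    nlinarith [mul_le_mul_of_nonneg_left h2 hs0]
  -- induction
  intro k hk
  induction k with
  | zero => omega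
  | succ n ih =>
    by_cases hn : n = 0
    · subst hn
      have := hrec 0
      simp only [Nat.cast_zero] at this ⊢
      have hd : φ (Xseq 0) - φ xstar ≥ 0 := by
        have := hmin (Xseq 0) (hmem 0)
        linarith
      nlinarith
    · have hn1 : 1 ≤ n := Nat.one_le_iff_ne_zero.mpr hn
      have ihn := ih hn1
      have := hrec n
      push_cast
      have hnn : (0:ℝ) ≤ (n:ℝ) := Nat.cast_nonneg n
      have h1 : (1 - 2 / ((n:ℝ)+2)) * (φ (Xseq n) - φ xstar) ≤
          (1 - 2 / ((n:ℝ)+2)) * (2 * M / ((n:ℝ)+2)) := by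
        apply mul_le_mul_of_nonneg_left ihn
        have := (hs n).2
        linarith
      have key : (1 - 2 / ((n:ℝ)+2)) * (2 * M / ((n:ℝ)+2)) + (2 / ((n:ℝ)+2))^2 / 2 * M
          ≤ 2 * M / ((n:ℝ)+3) := by
        have h2 : (0:ℝ) < (n:ℝ)+2 := by linarith
        have h3 : (0:ℝ) < (n:ℝ)+3 := by linarith
        rw [← sub_nonneg]
        have heq : 2 * M / ((n:ℝ)+3) -
            ((1 - 2 / ((n:ℝ)+2)) * (2 * M / ((n:ℝ)+2)) + (2 / ((n:ℝ)+2))^2 / 2 * M)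
            = 2 * M / (((n:ℝ)+3) * ((n:ℝ)+2)^2) := by
          field_simp
          ring
        rw [heq]
        positivity
      have e : (n:ℝ)+1+2 = (n:ℝ)+3 := by ring
      rw [e]
      linarith
end

section
/- (Euclidean instantiation of the Frank-Wolfe linear rate, Theorem 3.5.) Let E be a real inner product space, X ⊆ E a convex set, φ : E → ℝ a function with gradient ∇φ, M > 0 and μ > 0 constants such that: (i) φ is μ-strongly convex on X, i.e., φ(y) ≥ φ(x) + ⟪∇φ(x), y − x⟫ + (μ/2)‖y − x‖² for all x, y ∈ X; (ii) the curvature bound holds: φ(x + s(z − x)) ≤ φ(x) + s⟪∇φ(x), z − x⟫ + (s²/2)M for all x, z ∈ X and s ∈ [0,1]. Let x* ∈ X be the minimizer of φ over X and suppose r > 0 is such that the closed ball of radius r centered at x* is contained in X. Suppose X_0 ∈ X and for every k ≥ 0: Z_k ∈ X satisfies ⟪∇φ(X_k), Z_k − X_k⟫ ≤ ⟪∇φ(X_k), z − X_k⟫ for all z ∈ X; writing Δ_k := φ(X_k) − φ(x*), the stepsize s_k := r√(μ Δ_k)/(√2 M) satisfies s_k ≤ 1; and X_{k+1} = X_k +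 s_k(Z_k − X_k). Then for every k ≥ 0, Δ_{k+1} ≤ (1 − r²μ/(4M)) Δ_k. -/
open Set

/-- Euclidean instantiation of the Frank–Wolfe linear rate (Theorem 3.5):
if `φ` is `μ`-strongly convex on `X`, satisfies the curvature bound with constant
`M`, the minimizer `x*` has a closed ball of radius `r` around it contained in `X`,
and the Frank–Wolfe iterates use the stepsize `s_k = r √(μ Δ_k) / (√2 M)` (assumed
to be `≤ 1`), then the suboptimality gap `Δ_k = φ(X_k) - φ(x*)` contracts:
`Δ_{k+1} ≤ (1 - r² μ / (4 M)) Δ_k`. -/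
theorem frankWolfe_linear_rate
    {E : Type*} [NormedAddCommGroup E] [InnerProductSpace ℝ E]
    (X : Set E) (hX : Convex ℝ X)
    (φ : E → ℝ) (g : E → E) (M μ : ℝ) (hM : 0 < M) (hμ : 0 < μ)
    (hsconv : ∀ x ∈ X, ∀ y ∈ X,
      φ x + inner ℝ (g x) (y - x) + μ / 2 * ‖y - x‖ ^ 2 ≤ φ y)
    (hcurv : ∀ x ∈ X, ∀ z ∈ X, ∀ s ∈ Icc (0 : ℝ) 1,
      φ (x + s • (z - x)) ≤ φ x + s * inner ℝ (g x) (z - x) + s ^ 2 / 2 * M)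
    (xstar : E) (hxstar : xstar ∈ X) (hmin : ∀ z ∈ X, φ xstar ≤ φ z)
    (r : ℝ) (hr : 0 < r) (hball : Metric.closedBall xstar r ⊆ X)
    (Xseq Zseq : ℕ → E) (hX0 : Xseq 0 ∈ X)
    (hZmem : ∀ k, Zseq k ∈ X)
    (hZopt : ∀ k, ∀ z ∈ X,
      (inner ℝ (g (Xseq k)) (Zseq k - Xseq k) : ℝ) ≤ inner ℝ (g (Xseq k)) (z - Xseq k))
    (hstep : ∀ k : ℕ,
      r * Real.sqrt (μ * (φ (Xseq k) - φ xstar)) / (Real.sqrt 2 * M) ≤ 1)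
    (hupd : ∀ k : ℕ, Xseq (k + 1) = Xseq k
      + (r * Real.sqrt (μ * (φ (Xseq k) - φ xstar)) / (Real.sqrt 2 * M)) •
        (Zseq k - Xseq k)) :
    ∀ k : ℕ, φ (Xseq (k + 1)) - φ xstar ≤
      (1 - r ^ 2 * μ / (4 * M)) * (φ (Xseq k) - φ xstar) := by
  have hmem : ∀ k, Xseq k ∈ X := by
    intro k
    induction k with
    | zero => exact hX0
    | succ n ih =>
      rw [hupd n]
      set s := r * Real.sqrt (μ * (φ (Xseq n) - φ xstar)) / (Real.sqrt 2 * M) with hs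
      have hs0 : 0 ≤ s := by positivity
      have hs1 : s ≤ 1 := hstep n
      have heq : Xseq n + s • (Zseq n - Xseq n) = (1 - s) • Xseq n + s • Zseq n := by
        module
      rw [heq]
      exact hX ih (hZmem n) (by linarith) hs0 (by ring)
  intro k
  set x := Xseq k with hx
  set z := Zseq k with hz
  set Δ := φ x - φ xstar with hΔ
  have hxX : x ∈ X := hmem k
  have hΔ0 : 0 ≤ Δ := by
    have := hmin x hxX
    simp only [hΔ]; linarith
  -- PL-type inequality
  have hsc := hsconv x hxX xstar hxstar
  have hPL : 2 * μ * Δ ≤ ‖g x‖ ^ 2 := by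
    have hCS : -(‖g x‖ * ‖xstar - x‖) ≤ inner ℝ (g x) (xstar - x) := by
      have := abs_real_inner_le_norm (g x) (xstar - x)
      have := neg_abs_le (inner ℝ (g x) (xstar - x) : ℝ)
      nlinarith [abs_nonneg (inner ℝ (g x) (xstar - x) : ℝ)]
    nlinarith [sq_nonneg (μ * ‖xstar - x‖ - ‖g x‖), sq_nonneg ‖xstar - x‖]
  -- gap bound
  have hgap : (inner ℝ (g x) (z - x) : ℝ) ≤ -Δ - r * ‖g x‖ := by
    by_cases hg : g x = 0
    · have : Δ = 0 := by
        have : 2 * μ * Δ ≤ 0 := by simpa [hg] using hPL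
        nlinarith
      simp [hg, this, inner_zero_left]
    · have hgn : 0 < ‖g x‖ := norm_pos_iff.mpr hg
      set w := xstar - (r / ‖g x‖) • g x with hw
      have hwX : w ∈ X := by
        apply hball
        simp only [Metric.mem_closedBall, dist_eq_norm, hw]
        have : xstar - (r / ‖g x‖) • g x - xstar = -((r / ‖g x‖) • g x) := by abel
        rw [this, norm_neg, norm_smul]
        rw [Real.norm_eq_abs, abs_of_nonneg (by positivity)]
        rw [div_mul_cancel₀ _ (ne_of_gt hgn)]
      have h1 := hZopt k w hwX
      have h2 : (inner ℝ (g x) (w - x) : ℝ) = inner ℝ (g x) (xstar - x) - r * ‖g x‖ := by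
        have : w - x = (xstar - x) - (r / ‖g x‖) • g x := by rw [hw]; abel
        rw [this, inner_sub_right, inner_smul_right, real_inner_self_eq_norm_sq]
        field_simp
      have h3 : (inner ℝ (g x) (xstar - x) : ℝ) ≤ -Δ := by
        have hnn : 0 ≤ μ / 2 * ‖xstar - x‖ ^ 2 := by positivity
        simp only [hΔ]; linarith
      calc (inner ℝ (g x) (z - x) : ℝ) ≤ inner ℝ (g x) (w - x) := h1
        _ = inner ℝ (g x) (xstar - x) - r * ‖g x‖ := h2
        _ ≤ -Δ - r * ‖g x‖ := by linarith
  -- set up stepsize algebra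
  set a := Real.sqrt (μ * Δ) with hadef
  set b := Real.sqrt 2 with hbdef
  have ha0 : 0 ≤ a := Real.sqrt_nonneg _
  have ha2 : a ^ 2 = μ * Δ := Real.sq_sqrt (by positivity)
  have hb0 : 0 < b := by rw [hbdef]; positivity
  have hb2 : b ^ 2 = 2 := Real.sq_sqrt (by norm_num)
  set s := r * a / (b * M) with hsdef
  have hs0 : 0 ≤ s := by positivity
  have hs1 : s ≤ 1 := hstep k
  have hgnorm : b * a ≤ ‖g x‖ := by
    have h : (b * a) ^ 2 ≤ ‖g x‖ ^ 2 := by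
      have : (b * a) ^ 2 = 2 * (μ * Δ) := by rw [mul_pow, hb2, ha2]
      rw [this]; linarith [hPL]
    nlinarith [norm_nonneg (g x), mul_nonneg hb0.le ha0]
  have hcv := hcurv x hxX z (hZmem k) s ⟨hs0, hs1⟩
  have hXk1 : Xseq (k + 1) = x + s • (z - x) := hupd k
  have key1 : s * (r * (b * a)) = r ^ 2 * (μ * Δ) / M := by
    have h : s * (r * (b * a)) = r ^ 2 * a ^ 2 / M := by
      rw [hsdef]; field_simp
    rw [h, ha2]
  have key2 : s ^ 2 / 2 * M = r ^ 2 * (μ * Δ) / (4 * M) := by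
    have h : s ^ 2 = r ^ 2 * a ^ 2 / (b ^ 2 * M ^ 2) := by
      rw [hsdef]; field_simp
    rw [h, ha2, hb2]; field_simp; ring
  have hGs : s * (inner ℝ (g x) (z - x) : ℝ) ≤ s * (-Δ - r * ‖g x‖) :=
    mul_le_mul_of_nonneg_left hgap hs0
  have hGs2 : s * (-Δ - r * ‖g x‖) ≤ s * (-Δ) - r ^ 2 * (μ * Δ) / M := by
    have : s * (r * (b * a)) ≤ s * (r * ‖g x‖) := by
      apply mul_le_mul_of_nonneg_left _ hs0
      exact mul_le_mul_of_nonneg_left hgnorm hr.le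
    have expand : s * (-Δ - r * ‖g x‖) = s * (-Δ) - s * (r * ‖g x‖) := by ring
    linarith [key1]
  have hc0 : 0 ≤ r ^ 2 * (μ * Δ) / M := by positivity
  have hsΔ : 0 ≤ s * Δ := mul_nonneg hs0 hΔ0
  have hgoal : φ (Xseq (k + 1)) - φ xstar ≤ Δ - r ^ 2 * (μ * Δ) / (4 * M) := by
    rw [hXk1]
    have h4 : r ^ 2 * (μ * Δ) / M = 4 * (r ^ 2 * (μ * Δ) / (4 * M)) := by
      field_simp
    have hsneg : s * (-Δ) = -(s * Δ) := by ring
    linarith [hcv, hGs, hGs2, hsΔ, key2, h4, hΔ, hc0]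
  calc φ (Xseq (k + 1)) - φ xstar ≤ Δ - r ^ 2 * (μ * Δ) / (4 * M) := hgoal
    _ = (1 - r ^ 2 * μ / (4 * M)) * Δ := by field_simp
    _ = (1 - r ^ 2 * μ / (4 * M)) * (φ (Xseq k) - φ xstar) := by rw [hΔ]
end

section
/- (Theorem 4.4, convergence of the Frank-Wolfe gap for nonconvex Euclidean Frank-Wolfe.) Let E be a real inner product space, X ⊆ E a convex set, φ : E → ℝ a function with gradient ∇φ, and M > 0 a constant such that the curvature bound holds: φ(x + s(z − x)) ≤ φ(x) + s⟪∇φ(x), z − x⟫ + (s²/2)M for all x, z ∈ X and s ∈ [0,1]. Suppose X_0 ∈ X and for every k ≥ 0: Z_k ∈ X satisfies ⟪−∇φ(X_k), Z_k − X_k⟫ ≥ ⟪−∇φ(X_k), z − X_k⟫ for all z ∈ X; the Frank-Wolfe gap is G_k := ⟪−∇φ(X_k), Z_k − X_k⟫; the stepsize is s_k := min{G_k/M, 1}; and X_{k+1} = X_k + s_k(Z_k − X_k). Let h₀ := φ(X_0) − inf_{z ∈ X} φ(z) and assume this infimum is finite. Then for every K ≥ 0, min_{0 ≤ k ≤ K}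 G_k ≤ max{2h₀, M}/√(K+1). -/
open Set

/-- Theorem 4.4: convergence of the Frank–Wolfe gap for nonconvex Euclidean
Frank–Wolfe.  With curvature constant `M`, gap `G_k = ⟪-∇φ(X_k), Z_k - X_k⟫`,
stepsize `s_k = min {G_k / M, 1}`, and `h₀ = φ(X_0) - inf_{z ∈ X} φ(z)`, the
minimum gap after `K+1` iterations satisfies
`min_{0 ≤ k ≤ K} G_k ≤ max {2 h₀, M} / √(K+1)`. -/
theorem frankWolfe_nonconvex_gap_rate
    {E : Type*} [NormedAddCommGroup E] [InnerProductSpace ℝ E]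
    (X : Set E) (hX : Convex ℝ X)
    (φ : E → ℝ) (g : E → E) (M : ℝ) (hM : 0 < M)
    (hcurv : ∀ x ∈ X, ∀ z ∈ X, ∀ s ∈ Icc (0 : ℝ) 1,
      φ (x + s • (z - x)) ≤ φ x + s * inner ℝ (g x) (z - x) + s ^ 2 / 2 * M)
    (Xseq Zseq : ℕ → E) (hX0 : Xseq 0 ∈ X)
    (hZmem : ∀ k, Zseq k ∈ X)
    (hZopt : ∀ k, ∀ z ∈ X,
      (inner ℝ (-g (Xseq k)) (z - Xseq k) : ℝ) ≤ inner ℝ (-g (Xseq k)) (Zseq k - Xseq k))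
    (G : ℕ → ℝ) (hG : ∀ k, G k = inner ℝ (-g (Xseq k)) (Zseq k - Xseq k))
    (hupd : ∀ k : ℕ, Xseq (k + 1) = Xseq k + (min (G k / M) 1) • (Zseq k - Xseq k))
    (hbdd : BddBelow (φ '' X)) (h₀ : ℝ) (hh₀ : h₀ = φ (Xseq 0) - sInf (φ '' X)) :
    ∀ K : ℕ, (Finset.range (K + 1)).inf'
        (Finset.nonempty_range_iff.mpr (Nat.succ_ne_zero K)) G ≤
      max (2 * h₀) M / Real.sqrt ((K : ℝ) + 1) := by
  have hGnn_of : ∀ k, Xseq k ∈ X → 0 ≤ G k := by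
    intro k hk
    have h := hZopt k (Xseq k) hk
    rw [hG k]
    simpa using h
  have hmem : ∀ k, Xseq k ∈ X := by
    intro k
    induction k with
    | zero => exact hX0
    | succ k ih =>
      have h0 : 0 ≤ G k := hGnn_of k ih
      set s := min (G k / M) 1 with hs
      have hs0 : 0 ≤ s := le_min (div_nonneg h0 hM.le) zero_le_one
      have hs1 : s ≤ 1 := min_le_right _ _
      rw [hupd k]
      have hc := hX ih (hZmem k) (by linarith : (0:ℝ) ≤ 1 - s) hs0 (by ring)
      convert hc using 1
      module
  have hGnn : ∀ k, 0 ≤ G k := fun k => hGnn_of k (hmem k)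
  have key : ∀ k, 1/2 * min (G k ^ 2 / M) (G k) ≤ φ (Xseq k) - φ (Xseq (k+1)) := by
    intro k
    set s := min (G k / M) 1 with hs
    have hs0 : 0 ≤ s := le_min (div_nonneg (hGnn k) hM.le) zero_le_one
    have hs1 : s ≤ 1 := min_le_right _ _
    have hinner : (inner ℝ (g (Xseq k)) (Zseq k - Xseq k) : ℝ) = -G k := by
      rw [hG k, inner_neg_left]; ring
    have hc := hcurv (Xseq k) (hmem k) (Zseq k) (hZmem k) s ⟨hs0, hs1⟩
    rw [← hupd k, hinner] at hc
    rcases le_or_gt (G k) M with h | h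
    · have hsval : s = G k / M := min_eq_left ((div_le_one hM).mpr h)
      rw [hsval] at hc
      have he : G k / M * (-G k) + (G k / M)^2 / 2 * M = -(1/2 * (G k ^2 / M)) := by
        field_simp; ring
      have hmin : min (G k ^2 / M) (G k) ≤ G k ^2 / M := min_le_left _ _
      have : φ (Xseq (k+1)) ≤ φ (Xseq k) + (G k / M * (-G k) + (G k / M)^2/2 * M) := by
        linarith
      rw [he] at this
      linarith
    · have hsval : s = 1 := min_eq_right ((one_le_div hM).mpr h.le)
      rw [hsval] at hc
      have hmin : min (G k ^2 / M) (G k) ≤ G k := min_le_right _ _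
      nlinarith
  intro K
  have htel : ∑ k ∈ Finset.range (K+1), (φ (Xseq k) - φ (Xseq (k+1))) =
      φ (Xseq 0) - φ (Xseq (K+1)) := Finset.sum_range_sub' (fun k => φ (Xseq k)) (K+1)
  have hsum : ∑ k ∈ Finset.range (K+1), 1/2 * min (G k ^2 / M) (G k) ≤ h₀ := by
    have hinf : sInf (φ '' X) ≤ φ (Xseq (K+1)) := csInf_le hbdd ⟨Xseq (K+1), hmem _, rfl⟩
    calc ∑ k ∈ Finset.range (K+1), 1/2 * min (G k ^2 / M) (G k)
        ≤ ∑ k ∈ Finset.range (K+1), (φ (Xseq k) - φ (Xseq (k+1))) :=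
          Finset.sum_le_sum fun k _ => key k
      _ = φ (Xseq 0) - φ (Xseq (K+1)) := htel
      _ ≤ h₀ := by rw [hh₀]; linarith
  set gm := (Finset.range (K + 1)).inf'
      (Finset.nonempty_range_iff.mpr (Nat.succ_ne_zero K)) G with hgm
  have hg0 : 0 ≤ gm := by
    rw [hgm, Finset.le_inf'_iff]
    exact fun k _ => hGnn k
  have hterm : ∀ k ∈ Finset.range (K+1),
      1/2 * min (gm^2/M) gm ≤ 1/2 * min (G k ^2 / M) (G k) := by
    intro k hk
    have h1 : gm ≤ G k := Finset.inf'_le _ hk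
    have h2 : gm^2 ≤ G k ^2 := pow_le_pow_left₀ hg0 h1 2
    have h3 : gm^2/M ≤ G k ^2 / M := by gcongr
    have := min_le_min h3 h1
    linarith
  have hmain : ((K:ℝ)+1) * (1/2 * min (gm^2/M) gm) ≤ h₀ := by
    calc ((K:ℝ)+1) * (1/2 * min (gm^2/M) gm)
        = ∑ _k ∈ Finset.range (K+1), 1/2 * min (gm^2/M) gm := by
          rw [Finset.sum_const, Finset.card_range]; push_cast; ring
      _ ≤ ∑ k ∈ Finset.range (K+1), 1/2 * min (G k ^2 / M) (G k) :=
          Finset.sum_le_sum hterm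
      _ ≤ h₀ := hsum
  have h₀0 : 0 ≤ h₀ := by
    have : sInf (φ '' X) ≤ φ (Xseq 0) := csInf_le hbdd ⟨Xseq 0, hX0, rfl⟩
    rw [hh₀]; linarith
  set N := Real.sqrt ((K:ℝ) + 1) with hN
  have hN2 : N^2 = (K:ℝ)+1 := Real.sq_sqrt (by positivity)
  have hNpos : 0 < N := Real.sqrt_pos.mpr (by positivity)
  have hN1 : 1 ≤ N := by nlinarith
  have hmax0 : 0 ≤ max (2*h₀) M := le_trans hM.le (le_max_right _ _)
  rw [le_div_iff₀ hNpos]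
  rcases le_or_gt gm M with h | h
  · have hmin : min (gm^2/M) gm = gm^2/M := min_eq_left ((div_le_iff₀ hM).mpr (by nlinarith))
    rw [hmin] at hmain
    have h1 : ((K:ℝ)+1) * gm^2 ≤ 2*M*h₀ := by
      have h2 : ((K:ℝ)+1) * (1/2 * (gm^2 / M)) * (2*M) ≤ h₀ * (2*M) :=
        mul_le_mul_of_nonneg_right hmain (by positivity)
      calc ((K:ℝ)+1) * gm^2 = ((K:ℝ)+1) * (1/2*(gm^2/M)) * (2*M) := by
            field_simp
        _ ≤ h₀ * (2*M) := h2
        _ = 2*M*h₀ := by ring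
    have hmaxsq : 2*M*h₀ ≤ (max (2*h₀) M)^2 := by
      nlinarith [le_max_left (2*h₀) M, le_max_right (2*h₀) M]
    have hsq : (gm*N)^2 ≤ (max (2*h₀) M)^2 := by nlinarith
    exact (pow_le_pow_iff_left₀ (by positivity) hmax0 two_ne_zero).mp hsq
  · have hmin : min (gm^2/M) gm = gm := min_eq_right ((le_div_iff₀ hM).mpr (by nlinarith))
    rw [hmin] at hmain
    have h1 : gm * N ≤ gm * N^2 := by nlinarith [mul_nonneg (mul_nonneg hg0 hNpos.le) (sub_nonneg.mpr hN1)]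
    nlinarith [le_max_left (2*h₀) M]
end

section
/- (Refined two-case gap bound from the proof of Theorem 4.4.) In the setting of nonconvex Euclidean Frank-Wolfe — E a real inner product space, X ⊆ E convex, φ : E → ℝ with gradient ∇φ satisfying the curvature bound φ(x + s(z − x)) ≤ φ(x) + s⟪∇φ(x), z − x⟫ + (s²/2)M for all x, z ∈ X, s ∈ [0,1] with M > 0; X_0 ∈ X; Z_k ∈ X maximizing ⟪−∇φ(X_k), z − X_k⟫ over z ∈ X; G_k := ⟪−∇φ(X_k), Z_k − X_k⟫; s_k := min{G_k/M, 1}; X_{k+1} = X_k + s_k(Z_k − X_k); h₀ := φ(X_0) − inf_{z∈X} φ(z) finite — the following hold for every K ≥ 0, writing G̃_K := min_{0 ≤ k ≤ K} G_k: if h₀ > M/2 then G̃_K ≤ 2h₀/√(K+1), and if h₀ ≤ M/2 then G̃_K ≤ √(2 h₀ M/(K+1)). -/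
open Set

/-- Refined two-case bound on the minimum Frank–Wolfe gap from the proof of
Theorem 4.4: writing `G̃_K = min_{0 ≤ k ≤ K} G_k`, if `h₀ > M/2` then
`G̃_K ≤ 2 h₀ / √(K+1)`, and if `h₀ ≤ M/2` then `G̃_K ≤ √(2 h₀ M / (K+1))`. -/
theorem frankWolfe_nonconvex_gap_two_cases
    {E : Type*} [NormedAddCommGroup E] [InnerProductSpace ℝ E]
    (X : Set E) (hX : Convex ℝ X)
    (φ : E → ℝ) (g : E → E) (M : ℝ) (hM : 0 < M)
    (hcurv : ∀ x ∈ X, ∀ z ∈ X, ∀ s ∈ Icc (0 : ℝ) 1,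
      φ (x + s • (z - x)) ≤ φ x + s * inner ℝ (g x) (z - x) + s ^ 2 / 2 * M)
    (Xseq Zseq : ℕ → E) (hX0 : Xseq 0 ∈ X)
    (hZmem : ∀ k, Zseq k ∈ X)
    (hZopt : ∀ k, ∀ z ∈ X,
      (inner ℝ (-g (Xseq k)) (z - Xseq k) : ℝ) ≤ inner ℝ (-g (Xseq k)) (Zseq k - Xseq k))
    (G : ℕ → ℝ) (hG : ∀ k, G k = inner ℝ (-g (Xseq k)) (Zseq k - Xseq k))
    (hupd : ∀ k : ℕ, Xseq (k + 1) = Xseq k + (min (G k / M) 1) • (Zseq k - Xseq k))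
    (hbdd : BddBelow (φ '' X)) (h₀ : ℝ) (hh₀ : h₀ = φ (Xseq 0) - sInf (φ '' X)) :
    ∀ K : ℕ,
      (h₀ > M / 2 →
        (Finset.range (K + 1)).inf'
            (Finset.nonempty_range_iff.mpr (Nat.succ_ne_zero K)) G ≤
          2 * h₀ / Real.sqrt ((K : ℝ) + 1)) ∧
      (h₀ ≤ M / 2 →
        (Finset.range (K + 1)).inf'
            (Finset.nonempty_range_iff.mpr (Nat.succ_ne_zero K)) G ≤
          Real.sqrt (2 * h₀ * M / ((K : ℝ) + 1))) := by
  -- membership of the iterates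
  have hmem : ∀ k, Xseq k ∈ X := by
    intro k
    induction k with
    | zero => exact hX0
    | succ k ih =>
      have hGk : 0 ≤ G k := by
        rw [hG k]
        have := hZopt k (Xseq k) ih
        simpa using this
      have hs0 : (0 : ℝ) ≤ min (G k / M) 1 :=
        le_min (div_nonneg hGk hM.le) zero_le_one
      have hs1 : min (G k / M) 1 ≤ 1 := min_le_right _ _
      rw [hupd k]
      have heq : Xseq k + (min (G k / M) 1) • (Zseq k - Xseq k)
          = (1 - min (G k / M) 1) • Xseq k + (min (G k / M) 1) • Zseq k := by
        module
      rw [heq]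
      exact hX ih (hZmem k) (by linarith) hs0 (by ring)
  have hGnn : ∀ k, 0 ≤ G k := by
    intro k
    rw [hG k]
    have := hZopt k (Xseq k) (hmem k)
    simpa using this
  -- descent inequality
  have hdesc : ∀ k, φ (Xseq (k + 1)) ≤ φ (Xseq k) - G k * min (G k) M / (2 * M) := by
    intro k
    have hs0 : (0 : ℝ) ≤ min (G k / M) 1 :=
      le_min (div_nonneg (hGnn k) hM.le) zero_le_one
    have hs1 : min (G k / M) 1 ≤ 1 := min_le_right _ _
    have hc := hcurv (Xseq k) (hmem k) (Zseq k) (hZmem k) (min (G k / M) 1) ⟨hs0, hs1⟩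
    rw [hupd k]
    have hip : (inner ℝ (g (Xseq k)) (Zseq k - Xseq k) : ℝ) = -G k := by
      rw [hG k, inner_neg_left]; ring
    rw [hip] at hc
    refine hc.trans ?_
    rcases le_or_gt (G k) M with h | h
    · have hseq : min (G k / M) 1 = G k / M :=
        min_eq_left (by rw [div_le_one hM]; exact h)
      rw [hseq, min_eq_left h]
      have : G k / M * -G k + (G k / M) ^ 2 / 2 * M = -(G k * G k / (2 * M)) := by
        field_simp; ring
      linarith [this]
    · have hseq : min (G k / M) 1 = 1 :=
        min_eq_right ((one_le_div hM).mpr h.le)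
      rw [hseq, min_eq_right h.le]
      have heq2 : G k * M / (2 * M) = G k / 2 := by
        field_simp
      linarith [heq2]
  -- telescoping sum bound
  have hsum : ∀ K : ℕ, (Finset.range (K + 1)).sum
      (fun k => G k * min (G k) M / (2 * M)) ≤ φ (Xseq 0) - φ (Xseq (K + 1)) := by
    intro K
    induction K with
    | zero =>
      have := hdesc 0
      simp only [zero_add, Finset.sum_range_one]
      linarith
    | succ K ih =>
      rw [Finset.sum_range_succ]
      have := hdesc (K + 1)
      linarith
  intro K
  set Gt := (Finset.range (K + 1)).inf'
      (Finset.nonempty_range_iff.mpr (Nat.succ_ne_zero K)) G with hGt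
  have hGtnn : 0 ≤ Gt := by
    rw [hGt]
    obtain ⟨k, hk, hke⟩ := Finset.exists_mem_eq_inf' _ G
    rw [hke]; exact hGnn k
  have hGtle : ∀ k ∈ Finset.range (K + 1), Gt ≤ G k := fun k hk =>
    Finset.inf'_le _ hk
  have hN : (0 : ℝ) < (K : ℝ) + 1 := by positivity
  have hN1 : (1 : ℝ) ≤ (K : ℝ) + 1 := by
    have : (0 : ℝ) ≤ (K : ℝ) := Nat.cast_nonneg K
    linarith
  -- key inequality: (K+1) * Gt * min Gt M ≤ 2 h₀ M
  have hkey : ((K : ℝ) + 1) * (Gt * min Gt M) ≤ 2 * h₀ * M := by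
    have hlow : ((K : ℝ) + 1) * (Gt * min Gt M / (2 * M)) ≤
        (Finset.range (K + 1)).sum (fun k => G k * min (G k) M / (2 * M)) := by
      have : ((K : ℝ) + 1) * (Gt * min Gt M / (2 * M)) =
          (Finset.range (K + 1)).sum (fun _ => Gt * min Gt M / (2 * M)) := by
        rw [Finset.sum_const, Finset.card_range]
        push_cast; ring
      rw [this]
      refine Finset.sum_le_sum ?_
      intro k hk
      have h1 : Gt ≤ G k := hGtle k hk
      have h2 : min Gt M ≤ min (G k) M := min_le_min h1 le_rfl
      have h3 : 0 ≤ min Gt M := le_min hGtnn hM.le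
      have : Gt * min Gt M ≤ G k * min (G k) M :=
        mul_le_mul h1 h2 h3 (hGnn k)
      exact div_le_div_of_nonneg_right this (by linarith) |>.trans_eq rfl
    have hinf : sInf (φ '' X) ≤ φ (Xseq (K + 1)) :=
      csInf_le hbdd ⟨Xseq (K + 1), hmem _, rfl⟩
    have h1 : ((K : ℝ) + 1) * (Gt * min Gt M / (2 * M)) ≤ h₀ := by
      have := hsum K
      rw [hh₀]; linarith
    have h2M : (0 : ℝ) < 2 * M := by linarith
    calc ((K : ℝ) + 1) * (Gt * min Gt M)
        = (((K : ℝ) + 1) * (Gt * min Gt M / (2 * M))) * (2 * M) := by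
          field_simp
      _ ≤ h₀ * (2 * M) := by
          exact mul_le_mul_of_nonneg_right h1 h2M.le
      _ = 2 * h₀ * M := by ring
  have hh₀nn : 0 ≤ h₀ := by
    rw [hh₀]
    have : sInf (φ '' X) ≤ φ (Xseq 0) := csInf_le hbdd ⟨Xseq 0, hX0, rfl⟩
    linarith
  have hsqrtN : (0 : ℝ) < Real.sqrt ((K : ℝ) + 1) := Real.sqrt_pos.mpr hN
  have hsqrtN_le : Real.sqrt ((K : ℝ) + 1) ≤ (K : ℝ) + 1 := by
    nlinarith [Real.sq_sqrt hN.le, Real.sqrt_nonneg ((K : ℝ) + 1)]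
  constructor
  · -- case h₀ > M/2
    intro hcase
    rcases le_or_gt Gt M with hle | hgt
    · -- Gt ≤ M : (K+1) Gt² ≤ 2 h₀ M < 4 h₀²
      rw [min_eq_left hle] at hkey
      have hsq : Gt ^ 2 ≤ (2 * h₀) ^ 2 / ((K : ℝ) + 1) := by
        rw [le_div_iff₀ hN]
        nlinarith
      have : Gt ≤ Real.sqrt ((2 * h₀) ^ 2 / ((K : ℝ) + 1)) :=
        Real.le_sqrt_of_sq_le hsq
      refine this.trans_eq ?_
      rw [Real.sqrt_div (by positivity), Real.sqrt_sq (by linarith)]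
    · -- Gt > M : (K+1) Gt ≤ 2 h₀
      rw [min_eq_right hgt.le] at hkey
      have h1 : ((K : ℝ) + 1) * Gt ≤ 2 * h₀ := by
        nlinarith
      have h2 : Gt ≤ 2 * h₀ / ((K : ℝ) + 1) := by
        rw [le_div_iff₀ hN]; linarith [h1]
      refine h2.trans ?_
      gcongr
  · -- case h₀ ≤ M/2
    intro hcase
    have hGtM : Gt ≤ M := by
      by_contra hgt
      push_neg at hgt
      rw [min_eq_right hgt.le] at hkey
      have h1 : ((K : ℝ) + 1) * Gt ≤ 2 * h₀ := by nlinarith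
      nlinarith
    rw [min_eq_left hGtM] at hkey
    apply Real.le_sqrt_of_sq_le
    rw [le_div_iff₀ hN]
    nlinarith
end

section
/- (Sequence-level core of Theorem 4.4.) Let M > 0, K ≥ 0, and let φ_0, φ_1, …, φ_{K+1} be real numbers and G_0, …, G_K be nonnegative real numbers such that for every 0 ≤ k ≤ K: φ_{k+1} ≤ φ_k − G_k²/(2M) whenever G_k ≤ M, and φ_{k+1} ≤ φ_k − (G_k − M/2) whenever G_k > M. Let h₀ ≥ 0 satisfy h₀ ≥ φ_0 − φ_{K+1}. Then min_{0 ≤ k ≤ K} G_k ≤ max{2h₀, M}/√(K+1). -/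
/-- Sequence-level core of Theorem 4.4: if objective values `φ_k` decrease by
`G_k² / (2M)` when `G_k ≤ M` and by `G_k - M/2` when `G_k > M`, and the total
decrease is at most `h₀`, then `min_{0 ≤ k ≤ K} G_k ≤ max {2 h₀, M} / √(K+1)`. -/
theorem frankWolfe_gap_sequence_bound
    (M : ℝ) (hM : 0 < M) (K : ℕ) (φ G : ℕ → ℝ)
    (hGnn : ∀ k ≤ K, 0 ≤ G k)
    (hdec₁ : ∀ k ≤ K, G k ≤ M → φ (k + 1) ≤ φ k - G k ^ 2 / (2 * M))
    (hdec₂ : ∀ k ≤ K, M < G k → φ (k + 1) ≤ φ k - (G k - M / 2))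
    (h₀ : ℝ) (hh₀nn : 0 ≤ h₀) (hh₀ : φ 0 - φ (K + 1) ≤ h₀) :
    (Finset.range (K + 1)).inf'
        (Finset.nonempty_range_iff.mpr (Nat.succ_ne_zero K)) G ≤
      max (2 * h₀) M / Real.sqrt ((K : ℝ) + 1) := by
  have hne : (Finset.range (K + 1)).Nonempty :=
    Finset.nonempty_range_iff.mpr (Nat.succ_ne_zero K)
  set g := (Finset.range (K + 1)).inf' hne G with hgdef
  obtain ⟨k₀, hk₀, hgk₀⟩ := Finset.exists_mem_eq_inf' hne G
  have hg0 : 0 ≤ g := by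
    rw [hgdef, hgk₀]; exact hGnn k₀ (Nat.lt_succ_iff.mp (Finset.mem_range.mp hk₀))
  have hgle : ∀ k ≤ K, g ≤ G k := fun k hk =>
    Finset.inf'_le G (Finset.mem_range.mpr (Nat.lt_succ_of_le hk))
  set N : ℝ := (K : ℝ) + 1 with hNdef
  have hN1 : (1 : ℝ) ≤ N := by
    simp [hNdef]
  have hN0 : (0 : ℝ) < N := by linarith
  have hsN : 0 < Real.sqrt N := Real.sqrt_pos.mpr hN0
  have hsqN : Real.sqrt N ≤ N := by
    nlinarith [Real.sq_sqrt hN0.le, Real.sqrt_nonneg N]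
  have hmax0 : 0 ≤ max (2 * h₀) M := le_max_of_le_right hM.le
  -- telescoping sum helper
  have tele : ∀ D : ℝ, (∀ k ≤ K, D ≤ φ k - φ (k + 1)) → N * D ≤ h₀ := by
    intro D hD
    have hsum : ∑ k ∈ Finset.range (K + 1), D ≤
        ∑ k ∈ Finset.range (K + 1), (φ k - φ (k + 1)) :=
      Finset.sum_le_sum fun k hk =>
        hD k (Nat.lt_succ_iff.mp (Finset.mem_range.mp hk))
    rw [Finset.sum_range_sub' φ, Finset.sum_const, Finset.card_range,
      nsmul_eq_mul] at hsum
    have : (↑(K + 1) : ℝ) = N := by push_cast [hNdef]; ring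
    rw [this] at hsum
    linarith
  by_cases hgM : g ≤ M
  · -- small gap case
    have step : ∀ k ≤ K, g ^ 2 / (2 * M) ≤ φ k - φ (k + 1) := by
      intro k hk
      have hle := hgle k hk
      by_cases h : G k ≤ M
      · have hdec := hdec₁ k hk h
        have h3 : g ^ 2 / (2 * M) ≤ G k ^ 2 / (2 * M) := by
          gcongr <;> linarith
        linarith
      · have hdec := hdec₂ k hk (not_le.mp h)
        have : g ^ 2 / (2 * M) ≤ M / 2 := by
          rw [div_le_div_iff₀ (by linarith) (by norm_num)]
          nlinarith
        linarith
    have hsum := tele _ step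
    have hkey : g ^ 2 * N ≤ (max (2 * h₀) M) ^ 2 := by
      have h1 : 2 * h₀ ≤ max (2 * h₀) M := le_max_left _ _
      have h2 : M ≤ max (2 * h₀) M := le_max_right _ _
      have hsum' : N * g ^ 2 ≤ h₀ * (2 * M) := by
        rw [← mul_div_assoc] at hsum
        exact (div_le_iff₀ (by linarith)).mp hsum
      nlinarith [mul_le_mul h1 h2 hM.le hmax0]
    have h1 : g ^ 2 ≤ (max (2 * h₀) M / Real.sqrt N) ^ 2 := by
      rw [div_pow, Real.sq_sqrt hN0.le, le_div_iff₀ hN0]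
      exact hkey
    have := Real.sqrt_le_sqrt h1
    rwa [Real.sqrt_sq hg0, Real.sqrt_sq (by positivity)] at this
  · -- large gap case
    push_neg at hgM
    have step : ∀ k ≤ K, g / 2 ≤ φ k - φ (k + 1) := by
      intro k hk
      have hle := hgle k hk
      have hdec := hdec₂ k hk (lt_of_lt_of_le hgM hle)
      linarith
    have hsum := tele _ step
    have : g ≤ max (2 * h₀) M / N := by
      rw [le_div_iff₀ hN0]
      have : 2 * h₀ ≤ max (2 * h₀) M := le_max_left _ _
      nlinarith
    have hdd : max (2 * h₀) M / N ≤ max (2 * h₀) M / Real.sqrt N :=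
      div_le_div_of_nonneg_left hmax0 hsN hsqN
    linarith
end

section
/- (Theorem 4.6, closed form of the Euclidean linear oracle.) Let L, U be n×n complex Hermitian positive definite matrices with U − L positive definite, and let S be an n×n complex Hermitian matrix. Let P be an invertible n×n complex matrix with U − L = P*P, and let P S P* = Q Λ Q* where Q is unitary and Λ is a real diagonal matrix of eigenvalues λ_1, …, λ_n. Define D₊ to be the diagonal matrix with (D₊)_{ii} = 1 if λ_i ≥ 0 and (D₊)_{ii} = 0 if λ_i < 0, and set Z* := L + P* Q D₊ Q* P. Then Z* is Hermitian with L ⪯ Z* ⪯ U, and for every Hermitian matrix Z with L ⪯ Z ⪯ U, Re(trace(S·Z)) ≤ Re(trace(S·Z*)). -/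
open Matrix ComplexOrder

section Aux

variable {n : ℕ}

/-- Trace of `diagonal d * A` as a sum. -/
lemma trace_diagonal_mul (d : Fin n → ℂ) (A : Matrix (Fin n) (Fin n) ℂ) :
    (Matrix.diagonal d * A).trace = ∑ i, d i * A i i := by
  simp [Matrix.trace, Matrix.diag, Matrix.mul_apply, Matrix.diagonal_apply]

/-- Diagonal entries of a PSD matrix have nonnegative real part. -/
lemma psd_diag_re_nonneg {A : Matrix (Fin n) (Fin n) ℂ} (hA : A.PosSemidef)
    (i : Fin n) : 0 ≤ (A i i).re := by
  have h := hA.re_dotProduct_nonneg (Pi.single i 1)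
  simpa [dotProduct, Matrix.mulVec, Pi.single_apply, Finset.mul_sum,
    mul_comm] using h

end Aux

/-- Theorem 4.6: closed form of the Euclidean linear oracle. Given Hermitian
positive definite `L, U` with `U - L` positive definite, Hermitian `S`,
an invertible `P` with `U - L = P*P`, and a spectral decomposition
`P S P* = Q Λ Q*` with `Q` unitary and `Λ = diag(λ)` real, the matrix
`Z* = L + P* Q D₊ Q* P` (with `D₊ = diag(1 if λᵢ ≥ 0 else 0)`) is Hermitian,
satisfies `L ⪯ Z* ⪯ U`, and maximizes `Re(tr(S Z))` over Hermitian `L ⪯ Z ⪯ U`. -/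
theorem euclidean_linear_oracle {n : ℕ}
    (L U S P Q : Matrix (Fin n) (Fin n) ℂ)
    (hL : L.PosDef) (hU : U.PosDef) (hUL : (U - L).PosDef)
    (hS : S.IsHermitian)
    (hPinv : IsUnit P) (hPfac : U - L = Pᴴ * P)
    (hQ : Q ∈ Matrix.unitaryGroup (Fin n) ℂ)
    (lam : Fin n → ℝ)
    (hdiag : P * S * Pᴴ =
      Q * Matrix.diagonal (fun i => (lam i : ℂ)) * Qᴴ) :
    (L + Pᴴ * Q * Matrix.diagonal (fun i => if 0 ≤ lam i then (1 : ℂ) else 0)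
        * Qᴴ * P).IsHermitian ∧
    ((L + Pᴴ * Q * Matrix.diagonal (fun i => if 0 ≤ lam i then (1 : ℂ) else 0)
        * Qᴴ * P) - L).PosSemidef ∧
    (U - (L + Pᴴ * Q * Matrix.diagonal (fun i => if 0 ≤ lam i then (1 : ℂ) else 0)
        * Qᴴ * P)).PosSemidef ∧
    ∀ Z : Matrix (Fin n) (Fin n) ℂ, Z.IsHermitian →
      (Z - L).PosSemidef → (U - Z).PosSemidef →
      ((S * Z).trace).re ≤
        ((S * (L + Pᴴ * Q * Matrix.diagonal
          (fun i => if 0 ≤ lam i then (1 : ℂ) else 0) * Qᴴ * P)).trace).re := by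
  classical
  set D : Matrix (Fin n) (Fin n) ℂ :=
    Matrix.diagonal (fun i => if 0 ≤ lam i then (1 : ℂ) else 0) with hDdef
  set D' : Matrix (Fin n) (Fin n) ℂ :=
    Matrix.diagonal (fun i => if 0 ≤ lam i then (0 : ℂ) else 1) with hD'def
  set Lam : Matrix (Fin n) (Fin n) ℂ :=
    Matrix.diagonal (fun i => (lam i : ℂ)) with hLamdef
  set K : Matrix (Fin n) (Fin n) ℂ := Pᴴ * Q * D * Qᴴ * P with hKdef
  -- basic invertibility / unitarity facts
  have hPd : IsUnit P.det := (Matrix.isUnit_iff_isUnit_det P).mp hPinv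
  have hPHd : IsUnit Pᴴ.det := by rw [Matrix.det_conjTranspose]; exact hPd.star
  have hPP : P * P⁻¹ = 1 := Matrix.mul_nonsing_inv P hPd
  have hP'P : P⁻¹ * P = 1 := Matrix.nonsing_inv_mul P hPd
  have hPH : Pᴴ * (Pᴴ)⁻¹ = 1 := Matrix.mul_nonsing_inv _ hPHd
  have hPH' : (Pᴴ)⁻¹ * Pᴴ = 1 := Matrix.nonsing_inv_mul _ hPHd
  have hQQ : Q * Qᴴ = 1 := by
    simpa [Matrix.star_eq_conjTranspose] using (Matrix.mem_unitaryGroup_iff).mp hQ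
  have hQ'Q : Qᴴ * Q = 1 := by
    simpa [Matrix.star_eq_conjTranspose] using (Matrix.mem_unitaryGroup_iff').mp hQ
  -- PSD of the diagonal pieces
  have hDpsd : D.PosSemidef := by
    rw [hDdef]
    refine Matrix.posSemidef_diagonal_iff.mpr fun i => ?_
    split_ifs <;> simp
  have hD'psd : D'.PosSemidef := by
    rw [hD'def]
    refine Matrix.posSemidef_diagonal_iff.mpr fun i => ?_
    split_ifs <;> simp
  have hDD' : D + D' = 1 := by
    rw [hDdef, hD'def, Matrix.diagonal_add, ← Matrix.diagonal_one]
    refine congrArg Matrix.diagonal ?_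
    funext i
    by_cases h : 0 ≤ lam i <;> simp [h]
  -- K as a conjugation
  have hKeq : (Qᴴ * P)ᴴ * D * (Qᴴ * P) = K := by
    rw [hKdef]
    simp [Matrix.conjTranspose_mul, Matrix.mul_assoc]
  have hKpsd : K.PosSemidef := hKeq ▸ hDpsd.conjTranspose_mul_mul_same (Qᴴ * P)
  -- the complementary piece
  have hK'eq : (Qᴴ * P)ᴴ * D' * (Qᴴ * P) = Pᴴ * Q * D' * Qᴴ * P := by
    simp [Matrix.conjTranspose_mul, Matrix.mul_assoc]
  have hsum : K + Pᴴ * Q * D' * Qᴴ * P = U - L := by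
    have h1 : K + Pᴴ * Q * D' * Qᴴ * P = Pᴴ * Q * (D + D') * Qᴴ * P := by
      rw [hKdef]
      simp [Matrix.mul_add, Matrix.add_mul]
    rw [h1, hDD', Matrix.mul_one, Matrix.mul_assoc Pᴴ Q Qᴴ, hQQ, Matrix.mul_one,
      hPfac]
  have hULK : U - (L + K) = Pᴴ * Q * D' * Qᴴ * P := by
    have : U - (L + K) = (U - L) - K := by abel
    rw [this, ← hsum]; abel
  refine ⟨?_, ?_, ?_, ?_⟩
  · -- Hermitian
    have hKH : K.IsHermitian := hKpsd.isHermitian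
    exact hL.isHermitian.add hKH
  · -- Z* - L ⪰ 0
    have : L + K - L = K := by abel
    rw [this]; exact hKpsd
  · -- U - Z* ⪰ 0
    rw [hULK, ← hK'eq]
    exact hD'psd.conjTranspose_mul_mul_same (Qᴴ * P)
  · -- optimality
    intro Z hZ hZL hUZ
    set B : Matrix (Fin n) (Fin n) ℂ := P⁻¹ * Q with hBdef
    -- S in terms of the eigendecomposition
    have hS' : S = P⁻¹ * (Q * Lam * Qᴴ) * (Pᴴ)⁻¹ := by
      rw [← hdiag]
      have h1 : P⁻¹ * (P * S * Pᴴ) * (Pᴴ)⁻¹ = (P⁻¹ * P) * S * (Pᴴ * (Pᴴ)⁻¹) := by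
        simp only [Matrix.mul_assoc]
      rw [h1, hP'P, hPH, Matrix.one_mul, Matrix.mul_one]
    -- key trace identity
    have key : ∀ X : Matrix (Fin n) (Fin n) ℂ,
        (S * X).trace = ∑ i, (lam i : ℂ) * (Bᴴ * X * B) i i := by
      intro X
      rw [hS']
      have e1 : P⁻¹ * (Q * Lam * Qᴴ) * (Pᴴ)⁻¹ * X
          = P⁻¹ * (Q * (Lam * (Qᴴ * ((Pᴴ)⁻¹ * X)))) := by
        simp only [Matrix.mul_assoc]
      rw [e1, Matrix.trace_mul_comm, Matrix.mul_assoc Q _ P⁻¹,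
        Matrix.trace_mul_comm Q]
      have e2 : Lam * (Qᴴ * ((Pᴴ)⁻¹ * X)) * P⁻¹ * Q = Lam * (Bᴴ * X * B) := by
        rw [hBdef]
        simp only [Matrix.conjTranspose_mul, Matrix.conjTranspose_nonsing_inv,
          Matrix.mul_assoc]
      rw [e2, hLamdef, trace_diagonal_mul]
    -- the transformed matrices
    set M : Matrix (Fin n) (Fin n) ℂ := Bᴴ * (Z - L) * B with hMdef
    have hMpsd : M.PosSemidef := hZL.conjTranspose_mul_mul_same B
    have hB1 : Bᴴ * (U - L) * B = 1 := by
      rw [hPfac, hBdef]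
      have h1 : (P⁻¹ * Q)ᴴ * (Pᴴ * P) * (P⁻¹ * Q)
          = Qᴴ * ((Pᴴ)⁻¹ * Pᴴ) * ((P * P⁻¹) * Q) := by
        simp only [Matrix.conjTranspose_mul, Matrix.conjTranspose_nonsing_inv,
          Matrix.mul_assoc]
      rw [h1, hPH', hPP, Matrix.mul_one, Matrix.one_mul, hQ'Q]
    have h1M : Bᴴ * (U - Z) * B = 1 - M := by
      have h0 : U - Z = (U - L) - (Z - L) := by abel
      rw [h0, Matrix.mul_sub, Matrix.sub_mul, hB1, hMdef]
    have h1Mpsd : (1 - M).PosSemidef := h1M ▸ hUZ.conjTranspose_mul_mul_same B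
    -- transformed K is D
    have hKD : Bᴴ * K * B = D := by
      rw [hKdef, hBdef]
      have h1 : (P⁻¹ * Q)ᴴ * (Pᴴ * Q * D * Qᴴ * P) * (P⁻¹ * Q)
          = Qᴴ * ((Pᴴ)⁻¹ * Pᴴ) * Q * D * (Qᴴ * ((P * P⁻¹) * Q)) := by
        simp only [Matrix.conjTranspose_mul, Matrix.conjTranspose_nonsing_inv,
          Matrix.mul_assoc]
      rw [h1, hPH', hPP]
      simp [hQ'Q]
    -- diagonal bounds
    have hMre0 : ∀ i, 0 ≤ (M i i).re := fun i => psd_diag_re_nonneg hMpsd i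
    have hMre1 : ∀ i, (M i i).re ≤ 1 := by
      intro i
      have h := psd_diag_re_nonneg h1Mpsd i
      have h2 : ((1 - M : Matrix (Fin n) (Fin n) ℂ) i i).re = 1 - (M i i).re := by
        simp [Matrix.sub_apply, Matrix.one_apply_eq]
      linarith [h2 ▸ h]
    -- trace splits
    have hZsplit : (S * Z).trace = (S * L).trace + (S * (Z - L)).trace := by
      rw [← Matrix.trace_add, ← Matrix.mul_add]
      congr 2
      abel
    have hKsplit : (S * (L + K)).trace = (S * L).trace + (S * K).trace := by
      rw [Matrix.mul_add, Matrix.trace_add]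
    rw [hZsplit, hKsplit, Complex.add_re, Complex.add_re]
    have hZtrace : ((S * (Z - L)).trace).re = ∑ i, lam i * (M i i).re := by
      rw [key (Z - L), Complex.re_sum]
      exact Finset.sum_congr rfl fun i _ => by rw [Complex.re_ofReal_mul, hMdef]
    have hKtrace : ((S * K).trace).re
        = ∑ i, lam i * (if 0 ≤ lam i then (1 : ℝ) else 0) := by
      rw [key K, hKD, Complex.re_sum]
      refine Finset.sum_congr rfl fun i _ => ?_
      rw [hDdef]
      simp only [Matrix.diagonal_apply_eq]
      split_ifs <;> simp
    have hmain : ∑ i, lam i * (M i i).re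
        ≤ ∑ i, lam i * (if 0 ≤ lam i then (1 : ℝ) else 0) := by
      refine Finset.sum_le_sum fun i _ => ?_
      by_cases h : 0 ≤ lam i
      · simp only [h, if_true, mul_one]
        nlinarith [hMre1 i]
      · simp only [h, if_false, mul_zero]
        have : lam i ≤ 0 := le_of_not_ge h
        nlinarith [hMre0 i]
    rw [hZtrace, hKtrace]
    linarith
end

section
/- (Intermediate claim in the proof of Theorem 4.6: attainment.) Let A be an n×n complex Hermitian matrix with spectral decomposition A = Q Λ Q*, where Q is unitary and Λ is the real diagonal matrix of eigenvalues λ_1, …, λ_n. Let D₊ be the diagonal matrix with (D₊)_{ii} = 1 if λ_i ≥ 0 and 0 otherwise, and set Z₀ := Q D₊ Q*. Then Z₀ is Hermitian with 0 ⪯ Z₀ ⪯ I, and Re(trace(A·Z₀)) = Σ_{i=1}^n max(λ_i, 0). Consequently Z₀ maximizes Re(trace(A·Z)) over all Hermitian Z with 0 ⪯ Z ⪯ I. -/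
open Matrix ComplexOrder


lemma diag_re_nonneg_of_posSemidef {n : ℕ} {W : Matrix (Fin n) (Fin n) ℂ}
    (hW : W.PosSemidef) (i : Fin n) : 0 ≤ (W i i).re := by
  have h := hW.dotProduct_mulVec_nonneg (Pi.single i 1)
  simp [dotProduct, Matrix.mulVec, Pi.single_apply, Finset.mul_sum] at h
  exact (Complex.le_def.mp h).1

lemma trace_key {n : ℕ} (Q : Matrix (Fin n) (Fin n) ℂ)
    (lam : Fin n → ℝ) (Z : Matrix (Fin n) (Fin n) ℂ) :
    (Q * Matrix.diagonal (fun i => (lam i : ℂ)) * Qᴴ * Z).trace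
      = ∑ i, (lam i : ℂ) * (Qᴴ * Z * Q) i i := by
  have h1 : Q * Matrix.diagonal (fun i => (lam i : ℂ)) * Qᴴ * Z
      = (Q * Matrix.diagonal (fun i => (lam i : ℂ))) * (Qᴴ * Z) := by
    rw [Matrix.mul_assoc]
  rw [h1, Matrix.trace_mul_comm, ← Matrix.mul_assoc]
  simp [Matrix.trace, Matrix.diag, Matrix.mul_diagonal, mul_comm]

/-- Intermediate claim in the proof of Theorem 4.6 (attainment): if
`A = Q Λ Q*` is a spectral decomposition of the Hermitian matrix `A` with `Q`
unitary and `Λ = diag(λ)` real, then `Z₀ = Q D₊ Q*` (with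
`D₊ = diag(1 if λᵢ ≥ 0 else 0)`) is Hermitian with `0 ⪯ Z₀ ⪯ I`, attains
`Re(tr(A Z₀)) = Σᵢ max(λᵢ, 0)`, and hence maximizes `Re(tr(A Z))` over all
Hermitian `Z` with `0 ⪯ Z ⪯ I`. -/
theorem trace_mul_attained_at_projection {n : ℕ}
    (A Q : Matrix (Fin n) (Fin n) ℂ) (hA : A.IsHermitian)
    (hQ : Q ∈ Matrix.unitaryGroup (Fin n) ℂ)
    (lam : Fin n → ℝ)
    (hdecomp : A = Q * Matrix.diagonal (fun i => (lam i : ℂ)) * Qᴴ) :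
    (Q * Matrix.diagonal (fun i => if 0 ≤ lam i then (1 : ℂ) else 0) * Qᴴ).IsHermitian ∧
    (Q * Matrix.diagonal (fun i => if 0 ≤ lam i then (1 : ℂ) else 0) * Qᴴ).PosSemidef ∧
    ((1 : Matrix (Fin n) (Fin n) ℂ) -
      Q * Matrix.diagonal (fun i => if 0 ≤ lam i then (1 : ℂ) else 0) * Qᴴ).PosSemidef ∧
    ((A * (Q * Matrix.diagonal (fun i => if 0 ≤ lam i then (1 : ℂ) else 0) * Qᴴ)).trace).re
      = ∑ i, max (lam i) 0 ∧
    ∀ Z : Matrix (Fin n) (Fin n) ℂ, Z.IsHermitian →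
      Z.PosSemidef → ((1 : Matrix (Fin n) (Fin n) ℂ) - Z).PosSemidef →
      ((A * Z).trace).re ≤
        ((A * (Q * Matrix.diagonal (fun i => if 0 ≤ lam i then (1 : ℂ) else 0) * Qᴴ)).trace).re := by
  have hQ1 : Qᴴ * Q = 1 := by
    simpa [star] using (Matrix.mem_unitaryGroup_iff'.mp hQ)
  have hQ2 : Q * Qᴴ = 1 := by
    simpa [star] using (Matrix.mem_unitaryGroup_iff.mp hQ)
  set f : Fin n → ℂ := fun i => if 0 ≤ lam i then (1 : ℂ) else 0 with hf
  set D : Matrix (Fin n) (Fin n) ℂ := Matrix.diagonal f with hD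
  -- PosSemidef of D and 1 - D
  have hDpsd : D.PosSemidef := by
    refine Matrix.posSemidef_diagonal_iff.mpr fun i => ?_
    by_cases h : 0 ≤ lam i <;> simp [hf, h]
  have hDpsd' : ((1 : Matrix (Fin n) (Fin n) ℂ) - D).PosSemidef := by
    have : (1 : Matrix (Fin n) (Fin n) ℂ) - D = Matrix.diagonal (fun i => 1 - f i) := by
      rw [hD, ← Matrix.diagonal_one, ← Matrix.diagonal_sub]
    rw [this]
    refine Matrix.posSemidef_diagonal_iff.mpr fun i => ?_
    by_cases h : 0 ≤ lam i <;> simp [hf, h]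
  have hherm : (Q * D * Qᴴ).IsHermitian := by
    have := hDpsd.1
    unfold Matrix.IsHermitian
    rw [Matrix.conjTranspose_mul, Matrix.conjTranspose_mul, Matrix.conjTranspose_conjTranspose,
      this, Matrix.mul_assoc]
  have hpsd : (Q * D * Qᴴ).PosSemidef := hDpsd.mul_mul_conjTranspose_same Q
  have hsub : (1 : Matrix (Fin n) (Fin n) ℂ) - Q * D * Qᴴ = Q * (1 - D) * Qᴴ := by
    rw [Matrix.mul_sub, Matrix.sub_mul, Matrix.mul_one, hQ2]
  have hpsd' : ((1 : Matrix (Fin n) (Fin n) ℂ) - Q * D * Qᴴ).PosSemidef := by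
    rw [hsub]; exact hDpsd'.mul_mul_conjTranspose_same Q
  -- the general trace formula
  have key : ∀ Z : Matrix (Fin n) (Fin n) ℂ,
      ((A * Z).trace).re = ∑ i, lam i * ((Qᴴ * Z * Q) i i).re := by
    intro Z
    rw [hdecomp, trace_key Q lam Z, Complex.re_sum]
    congr 1; ext i
    simp [Complex.mul_re]
  -- value at Z₀
  have hW0 : Qᴴ * (Q * D * Qᴴ) * Q = D := by
    rw [← Matrix.mul_assoc, ← Matrix.mul_assoc, hQ1, Matrix.one_mul,
      Matrix.mul_assoc, hQ1, Matrix.mul_one]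
  have hval : ((A * (Q * D * Qᴴ)).trace).re = ∑ i, max (lam i) 0 := by
    rw [key, hW0]
    refine Finset.sum_congr rfl fun i _ => ?_
    by_cases h : 0 ≤ lam i
    · simp [hD, hf, h, max_eq_left h]
    · simp [hD, hf, h, max_eq_right (le_of_lt (lt_of_not_ge h))]
  refine ⟨hherm, hpsd, hpsd', hval, ?_⟩
  intro Z hZ hZpsd hZpsd'
  rw [hval, key]
  set W := Qᴴ * Z * Q with hWdef
  have hWpsd : W.PosSemidef := hZpsd.conjTranspose_mul_mul_same Q
  have hWpsd' : ((1 : Matrix (Fin n) (Fin n) ℂ) - W).PosSemidef := by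
    have : (1 : Matrix (Fin n) (Fin n) ℂ) - W = Qᴴ * (1 - Z) * Q := by
      rw [Matrix.mul_sub, Matrix.sub_mul, Matrix.mul_one, hQ1]
    rw [this]
    exact hZpsd'.conjTranspose_mul_mul_same Q
  refine Finset.sum_le_sum fun i _ => ?_
  have h0 : 0 ≤ (W i i).re := diag_re_nonneg_of_posSemidef hWpsd i
  have h1 : (W i i).re ≤ 1 := by
    have := diag_re_nonneg_of_posSemidef hWpsd' i
    simp [Matrix.sub_apply, Matrix.one_apply, Complex.sub_re] at this
    linarith
  rcases le_or_gt 0 (lam i) with h | h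
  · calc lam i * (W i i).re ≤ lam i * 1 := by nlinarith
    _ = max (lam i) 0 := by rw [mul_one, max_eq_left h]
  · calc lam i * (W i i).re ≤ 0 := by nlinarith
    _ = max (lam i) 0 := (max_eq_right h.le).symm
end
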